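/- For a fully disconnected affine IFS on ℝ with attractor A, define H^1 = E^0 ∖ Φ(E^0) and H^n = Φ(H^{n−1}) for n ≥ 2. Then the complement of the attractor within its convex hull is the countable disjoint union of all gaps: E^0 ∖ A = ⋃_{n=1}^∞ H^n. -/

import Mathlib

open Set Filter

/-- For a fully disconnected affine IFS on ℝ with attractor `A`,
with gap sets `H 1 = E⁰ \ Φ(E⁰)` and `H n = Φ(H (n-1))` for `n ≥ 2`, the complement of
the attractor within its convex hull is the countable disjoint union of all gaps:
`E⁰ \ A = ⋃_{n≥1} H n`. -/
theorem stmt_19 (M : ℕ) (hM : 2 ≤ M) (δ γ : Fin M → ℝ)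
    (hδ0 : ∀ j, 0 < δ j) (hδ1 : ∀ j, δ j < 1) (hγ : Function.Injective γ)
    (hdisj : ∀ i j : Fin M, i ≠ j →
      Disjoint ((fun s => δ i * (s - γ i) + γ i) '' Set.Icc (⨅ j, γ j) (⨆ j, γ j))
               ((fun s => δ j * (s - γ j) + γ j) '' Set.Icc (⨅ j, γ j) (⨆ j, γ j)))
    (A : Set ℝ) (hAne : A.Nonempty) (hAc : IsCompact A)
    (hAfix : A = ⋃ j : Fin M, (fun s => δ j * (s - γ j) + γ j) '' A)
    (H : ℕ → Set ℝ)
    (hH1 : H 1 = Set.Icc (⨅ j, γ j) (⨆ j, γ j) \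
      (⋃ j : Fin M, (fun s => δ j * (s - γ j) + γ j) '' Set.Icc (⨅ j, γ j) (⨆ j, γ j)))
    (hHrec : ∀ n, 2 ≤ n →
      H n = ⋃ j : Fin M, (fun s => δ j * (s - γ j) + γ j) '' H (n - 1)) :
    (∀ m n, 1 ≤ m → 1 ≤ n → m ≠ n → Disjoint (H m) (H n)) ∧
    Set.Icc (⨅ j, γ j) (⨆ j, γ j) \ A = ⋃ n : ℕ, H (n + 1) := by
  classical
  haveI : Nonempty (Fin M) := ⟨⟨0, by omega⟩⟩
  set a₀ : ℝ := ⨅ j, γ j with ha₀def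
  set b₀ : ℝ := ⨆ j, γ j with hb₀def
  set E : Set ℝ := Icc a₀ b₀ with hEdef
  set Φ : Set ℝ → Set ℝ :=
    fun B => ⋃ j : Fin M, (fun s => δ j * (s - γ j) + γ j) '' B with hΦdef
  have hΦB : ∀ B : Set ℝ,
      (⋃ j : Fin M, (fun s => δ j * (s - γ j) + γ j) '' B) = Φ B := fun _ => rfl
  simp only [hΦB] at hH1 hHrec hAfix
  -- basic bounds on the fixed points
  have hγa : ∀ j, a₀ ≤ γ j := fun j =>
    ciInf_le ((Set.finite_range γ).bddBelow) j
  have hγb : ∀ j, γ j ≤ b₀ := fun j =>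
    le_ciSup ((Set.finite_range γ).bddAbove) j
  -- each map sends E into E
  have hmaps : ∀ j, Set.MapsTo (fun s => δ j * (s - γ j) + γ j) E E := by
    intro j s hs
    simp only [hEdef, Set.mem_Icc] at hs ⊢
    obtain ⟨hs1, hs2⟩ := hs
    constructor
    · nlinarith [mul_nonneg (hδ0 j).le (sub_nonneg.mpr hs1),
        mul_nonneg (sub_nonneg.mpr (hδ1 j).le) (sub_nonneg.mpr (hγa j))]
    · nlinarith [mul_nonneg (hδ0 j).le (sub_nonneg.mpr hs2),
        mul_nonneg (sub_nonneg.mpr (hδ1 j).le) (sub_nonneg.mpr (hγb j))]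
  have hφinj : ∀ j, Function.Injective (fun s => δ j * (s - γ j) + γ j) := by
    intro j s t h
    simp only at h
    have h2 : δ j * (s - γ j) = δ j * (t - γ j) := by linarith
    have := mul_left_cancel₀ (hδ0 j).ne' h2
    linarith
  have hΦmono : ∀ {X Y : Set ℝ}, X ⊆ Y → Φ X ⊆ Φ Y := by
    intro X Y h
    exact iUnion_mono fun j => image_mono h
  have hΦE : Φ E ⊆ E := iUnion_subset fun j => (hmaps j).image_subset
  -- iterates are decreasing
  have hstep : ∀ n, Φ^[n + 1] E ⊆ Φ^[n] E := by
    intro n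
    induction n with
    | zero => simpa using hΦE
    | succ n ih =>
      have h2 : Φ (Φ^[n + 1] E) ⊆ Φ (Φ^[n] E) := hΦmono ih
      rwa [← Function.iterate_succ_apply' Φ (n + 1) E,
        ← Function.iterate_succ_apply' Φ n E] at h2
  have hEle : ∀ m n, m ≤ n → Φ^[n] E ⊆ Φ^[m] E := by
    intro m n h
    induction h with
    | refl => exact subset_rfl
    | step _ ih => exact (hstep _).trans ih
  have hEnE : ∀ n, Φ^[n] E ⊆ E := by
    intro n
    simpa using hEle 0 n (Nat.zero_le n)
  -- Φ distributes over set differences of subsets of E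
  have hdiff : ∀ X Y : Set ℝ, X ⊆ E → Y ⊆ E → Φ (X \ Y) = Φ X \ Φ Y := by
    intro X Y hX hY
    ext x
    simp only [hΦdef, mem_iUnion, mem_diff, mem_image]
    constructor
    · rintro ⟨j, s, ⟨hsX, hsY⟩, rfl⟩
      refine ⟨⟨j, s, hsX, rfl⟩, ?_⟩
      rintro ⟨i, t, htY, hit⟩
      by_cases hij : i = j
      · subst hij
        exact hsY (by rwa [hφinj i hit] at htY)
      · exact Set.disjoint_left.mp (hdisj i j hij)
          ⟨t, hY htY, hit⟩ ⟨s, hX hsX, rfl⟩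
    · rintro ⟨⟨j, s, hsX, rfl⟩, hnot⟩
      exact ⟨j, s, ⟨hsX, fun hsY => hnot ⟨j, s, hsY, rfl⟩⟩, rfl⟩
  -- the gaps are the differences of consecutive iterates
  have hHn : ∀ n : ℕ, H (n + 1) = Φ^[n] E \ Φ^[n + 1] E := by
    intro n
    induction n with
    | zero => simpa using hH1
    | succ n ih =>
      have h2 : H (n + 2) = Φ (H (n + 1)) := by
        have := hHrec (n + 2) (by omega)
        simpa using this
      rw [h2, ih, hdiff _ _ (hEnE n) (hEnE (n + 1)),
        ← Function.iterate_succ_apply' Φ n E,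
        ← Function.iterate_succ_apply' Φ (n + 1) E]
  -- the attractor is contained in E
  have hAsub : A ⊆ E := by
    have hbA : sSup A ≤ b₀ := by
      have hmem : sSup A ∈ Φ A := by rw [← hAfix]; exact hAc.sSup_mem hAne
      simp only [hΦdef, mem_iUnion, mem_image] at hmem
      obtain ⟨j, c, hcA, hce⟩ := hmem
      have hcb : c ≤ sSup A := le_csSup hAc.bddAbove hcA
      have hgoal : sSup A ≤ γ j := by
        nlinarith [mul_le_mul_of_nonneg_left hcb (hδ0 j).le, hδ0 j, hδ1 j]
      exact hgoal.trans (hγb j)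
    have haA : a₀ ≤ sInf A := by
      have hmem : sInf A ∈ Φ A := by rw [← hAfix]; exact hAc.sInf_mem hAne
      simp only [hΦdef, mem_iUnion, mem_image] at hmem
      obtain ⟨j, c, hcA, hce⟩ := hmem
      have hcb : sInf A ≤ c := csInf_le hAc.bddBelow hcA
      have hgoal : γ j ≤ sInf A := by
        nlinarith [mul_le_mul_of_nonneg_left hcb (hδ0 j).le, hδ0 j, hδ1 j]
      exact (hγa j).trans hgoal
    intro x hx
    exact ⟨haA.trans (csInf_le hAc.bddBelow hx),
      (le_csSup hAc.bddAbove hx).trans hbA⟩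
  have hAEn : ∀ n, A ⊆ Φ^[n] E := by
    intro n
    induction n with
    | zero => simpa using hAsub
    | succ n ih =>
      rw [Function.iterate_succ_apply']
      calc A = Φ A := hAfix
        _ ⊆ Φ (Φ^[n] E) := hΦmono ih
  -- the intersection of the iterates is contained in A
  obtain ⟨j₀, hj₀⟩ := Finite.exists_max δ
  set r : ℝ := δ j₀ with hrdef
  have hr0 : 0 < r := hδ0 j₀
  have hr1 : r < 1 := hδ1 j₀
  have happrox : ∀ n, ∀ x ∈ Φ^[n] E, ∃ y ∈ A, |x - y| ≤ r ^ n * (b₀ - a₀) := by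
    intro n
    induction n with
    | zero =>
      intro x hx
      obtain ⟨y, hy⟩ := hAne
      have hxE : x ∈ E := by simpa using hx
      have hyE : y ∈ E := hAsub hy
      refine ⟨y, hy, ?_⟩
      rw [abs_le]
      constructor
      · simp only [pow_zero, one_mul]; linarith [hxE.1, hxE.2, hyE.1, hyE.2]
      · simp only [pow_zero, one_mul]; linarith [hxE.1, hxE.2, hyE.1, hyE.2]
    | succ n ih =>
      intro x hx
      rw [Function.iterate_succ_apply'] at hx
      simp only [hΦdef, mem_iUnion, mem_image] at hx
      obtain ⟨j, s, hs, rfl⟩ := hx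
      obtain ⟨y, hyA, hxy⟩ := ih s hs
      refine ⟨δ j * (y - γ j) + γ j, ?_, ?_⟩
      · rw [hAfix]
        simp only [hΦdef, mem_iUnion, mem_image]
        exact ⟨j, y, hyA, rfl⟩
      · have heq : (δ j * (s - γ j) + γ j) - (δ j * (y - γ j) + γ j)
            = δ j * (s - y) := by ring
        rw [heq, abs_mul, abs_of_pos (hδ0 j)]
        calc δ j * |s - y| ≤ r * (r ^ n * (b₀ - a₀)) :=
              mul_le_mul (hj₀ j) hxy (abs_nonneg _) hr0.le
          _ = r ^ (n + 1) * (b₀ - a₀) := by ring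
  have hInter : (⋂ n : ℕ, Φ^[n] E) ⊆ A := by
    intro x hx
    have hd : ∀ n : ℕ, Metric.infDist x A ≤ r ^ n * (b₀ - a₀) := by
      intro n
      obtain ⟨y, hyA, hxy⟩ := happrox n x (mem_iInter.mp hx n)
      exact le_trans (Metric.infDist_le_dist_of_mem hyA) (by rwa [Real.dist_eq])
    have htend : Tendsto (fun n : ℕ => r ^ n * (b₀ - a₀)) atTop (nhds 0) := by
      simpa using (tendsto_pow_atTop_nhds_zero_of_lt_one hr0.le hr1).mul_const (b₀ - a₀)
    have h0 : Metric.infDist x A ≤ 0 := ge_of_tendsto' htend hd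
    exact (hAc.isClosed.mem_iff_infDist_zero hAne).mpr
      (le_antisymm h0 Metric.infDist_nonneg)
  -- conclusion
  constructor
  · -- disjointness
    have hkey : ∀ m n, 1 ≤ m → m < n → Disjoint (H m) (H n) := by
      intro m n hm hmn
      obtain ⟨m', rfl⟩ : ∃ m', m = m' + 1 := ⟨m - 1, by omega⟩
      obtain ⟨n', rfl⟩ : ∃ n', n = n' + 1 := ⟨n - 1, by omega⟩
      rw [hHn, hHn]
      rw [Set.disjoint_left]
      intro x hxm hxn
      exact hxm.2 (hEle (m' + 1) n' (by omega) hxn.1)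
    intro m n hm hn hmn
    rcases lt_or_gt_of_ne hmn with h | h
    · exact hkey m n hm h
    · exact (hkey n m hn h).symm
  · -- the union identity
    apply Set.Subset.antisymm
    · intro x hx
      have hex : ∃ n, x ∉ Φ^[n] E := by
        by_contra hcon
        push_neg at hcon
        exact hx.2 (hInter (mem_iInter.mpr hcon))
      set n₀ := Nat.find hex with hn₀def
      have hn₀ : x ∉ Φ^[n₀] E := Nat.find_spec hex
      have hpos : n₀ ≠ 0 := by
        intro h0
        apply hn₀
        rw [h0]
        simpa using hx.1
      obtain ⟨k, hk⟩ : ∃ k, n₀ = k + 1 := ⟨n₀ - 1, by omega⟩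
      have hxk : x ∈ Φ^[k] E := by
        by_contra hc
        exact Nat.find_min hex (by omega : k < n₀) hc
      refine mem_iUnion.mpr ⟨k, ?_⟩
      rw [hHn k]
      exact ⟨hxk, by rw [← hk]; exact hn₀⟩
    · refine iUnion_subset fun n => ?_
      rw [hHn n]
      intro x hx
      exact ⟨hEnE n hx.1, fun hxA => hx.2 (hAEn (n + 1) hxA)⟩
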